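/- Let k ≥ 2, let {t_n} be the 2k-nacci sequence, let T_n denote the column vector (t_n, t_{n+1}, ..., t_{n+2k-1})^T, and let B_0 = (t_{i+j})_{0≤i,j≤2k-1}. Then for all positive integers n and w, t_{n+w} = T_n^T B_0^{-1} T_w. -/

import Mathlib

lemma dvd_char (k m : ℕ) (hk : 2 ≤ k) (hm : m ≤ 4*k-2) :
    (2*k+1) ∣ m ↔ (m = 0 ∨ m = 2*k+1) := by
  constructor
  · rintro ⟨q, hq⟩
    have hq1 : q ≤ 1 := by
      by_contra h
      push_neg at h
      have : (2*k+1)*2 ≤ (2*k+1)*q := Nat.mul_le_mul_left _ h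
      omega
    interval_cases q <;> omega
  · rintro (rfl | rfl) <;> simp

lemma isUnit_detA (k : ℕ) (hk : 2 ≤ k)
    (A : Matrix (Fin (2*k)) (Fin (2*k)) (ZMod 2))
    (hA : ∀ i j, A i j = if (2*k+1) ∣ ((i:ℕ)+(j:ℕ)) then 0 else 1) :
    IsUnit A.det := by
  have hk4 : 4 ≤ 2*k := by omega
  have hcard0 : ((2*k : ℕ) : ZMod 2) = 0 := by
    rw [ZMod.natCast_eq_zero_iff]
    exact Dvd.intro k rfl
  set i0 : Fin (2*k) := ⟨0, by omega⟩ with hi0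
  set i1 : Fin (2*k) := ⟨1, by omega⟩ with hi1
  set C : Matrix (Fin (2*k)) (Fin (2*k)) (ZMod 2) := fun j i =>
    (if i = i1 then 1 else 0) +
    (if j = i1 then 1 else (if (i:ℕ) = (if (j:ℕ) = 0 then 0 else 2*k+1-(j:ℕ)) then 1 else 0))
    with hC
  have hA1 : ∀ m : Fin (2*k), A i1 m = 1 := by
    intro m
    rw [hA, if_neg]
    rw [dvd_char k _ hk (by omega)]
    have := m.isLt
    simp only [hi1]
    omega
  -- column sums
  have hS : ∀ m : Fin (2*k), (∑ i, A i m) = if m = i1 then 0 else 1 := by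
    intro m
    have hstep : ∀ i : Fin (2*k), A i m
        = (if (2*k+1) ∣ ((i:ℕ)+(m:ℕ)) then (1:ZMod 2) else 0) + 1 := by
      intro i
      rw [hA]
      by_cases h : (2*k+1) ∣ ((i:ℕ)+(m:ℕ)) <;> simp [h] <;> decide
    rw [Finset.sum_congr rfl (fun i _ => hstep i), Finset.sum_add_distrib]
    have hones : (∑ _i : Fin (2*k), (1:ZMod 2)) = 0 := by
      rw [Finset.sum_const]
      simp only [Finset.card_univ, Fintype.card_fin, nsmul_eq_mul, mul_one]
      exact hcard0
    rw [hones, add_zero, Finset.sum_boole]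
    by_cases hm1 : m = i1
    · rw [if_pos hm1]
      have : (Finset.univ.filter (fun i : Fin (2*k) => (2*k+1) ∣ ((i:ℕ)+(m:ℕ)))) = ∅ := by
        apply Finset.filter_false_of_mem
        intro x _
        have := x.isLt
        rw [dvd_char k _ hk (by omega)]
        rw [hm1]; simp only [hi1]
        omega
      rw [this]
      simp
    · rw [if_neg hm1]
      have hmne : (m:ℕ) ≠ 1 := by
        intro h; exact hm1 (Fin.ext h)
      rcases Nat.eq_zero_or_pos (m:ℕ) with hm0 | hmpos
      · have : (Finset.univ.filter (fun i : Fin (2*k) => (2*k+1) ∣ ((i:ℕ)+(m:ℕ)))) = {i0} := by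
          apply Finset.eq_singleton_iff_unique_mem.mpr
          constructor
          · rw [Finset.mem_filter]
            refine ⟨Finset.mem_univ _, ?_⟩
            simp only [hi0, hm0]
            simp
          · intro x hx
            rw [Finset.mem_filter] at hx
            have hxlt := x.isLt
            have := m.isLt
            rw [dvd_char k _ hk (by omega)] at hx
            apply Fin.ext
            simp only [hi0]
            omega
        rw [this]
        simp
      · have hm2 : 2 ≤ (m:ℕ) := by omega
        have hmlt := m.isLt
        have : (Finset.univ.filter (fun i : Fin (2*k) => (2*k+1) ∣ ((i:ℕ)+(m:ℕ))))
            = {(⟨2*k+1-(m:ℕ), by omega⟩ : Fin (2*k))} := by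
          apply Finset.eq_singleton_iff_unique_mem.mpr
          constructor
          · rw [Finset.mem_filter]
            refine ⟨Finset.mem_univ _, ?_⟩
            have : ((⟨2*k+1-(m:ℕ), by omega⟩ : Fin (2*k)) : ℕ) + (m:ℕ) = 2*k+1 := by
              simp only []
              omega
            rw [this]
          · intro x hx
            rw [Finset.mem_filter] at hx
            have hxlt := x.isLt
            rw [dvd_char k _ hk (by omega)] at hx
            apply Fin.ext
            simp only []
            omega
        rw [this]
        simp
  -- C * A = 1
  have key : C * A = 1 := by
    ext j m
    rw [Matrix.mul_apply]
    simp only [hC, add_mul]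
    rw [Finset.sum_add_distrib]
    have e1 : (∑ i, (if i = i1 then (1:ZMod 2) else 0) * A i m) = A i1 m := by
      rw [Finset.sum_eq_single i1]
      · simp
      · intro b _ hb; simp [hb]
      · simp
    rw [e1, hA1]
    by_cases hj : j = i1
    · simp only [if_pos hj, one_mul]
      rw [hS m]
      rw [Matrix.one_apply]
      by_cases hm : m = i1
      · rw [if_pos hm, if_pos (hj.trans hm.symm), add_zero]
      · rw [if_neg hm, if_neg (fun (h : j = m) => hm (h ▸ hj))]
        decide
    · simp only [if_neg hj]
      have hjne : (j:ℕ) ≠ 1 := fun h => hj (Fin.ext h)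
      have hjlt := j.isLt
      set v : ℕ := if (j:ℕ) = 0 then 0 else 2*k+1-(j:ℕ) with hv
      have hvlt : v < 2*k := by
        rw [hv]; split <;> omega
      set σ : Fin (2*k) := ⟨v, hvlt⟩ with hσ
      have e2 : (∑ i : Fin (2*k), (if (i:ℕ) = v then (1:ZMod 2) else 0) * A i m) = A σ m := by
        rw [Finset.sum_eq_single σ]
        · rw [if_pos (show (σ:ℕ) = v from rfl), one_mul]
        · intro b _ hb
          rw [if_neg, zero_mul]
          intro h
          exact hb (Fin.ext h)
        · simp
      rw [e2, hA σ m]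
      have hmlt := m.isLt
      have hσv : (σ:ℕ) = v := rfl
      rw [Matrix.one_apply]
      rcases Nat.eq_zero_or_pos (j:ℕ) with hj0 | hjpos
      · have hv0 : v = 0 := by rw [hv, if_pos hj0]
        rw [hσv, hv0]
        by_cases hm0 : (m:ℕ) = 0
        · rw [if_pos (by simp [hm0]), if_pos (Fin.ext (by omega) : j = m)]
          decide
        · rw [if_neg, if_neg (fun h : j = m => hm0 (by rw [← h, hj0]))]
          · decide
          · rw [dvd_char k _ hk (by omega)]
            omega
      · have hj2 : 2 ≤ (j:ℕ) := by omega
        have hvval : v = 2*k+1-(j:ℕ) := by rw [hv, if_neg (by omega)]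
        by_cases hjm : j = m
        · rw [if_pos hjm, if_pos]
          · decide
          · rw [hσv, hvval, ← hjm]
            have : 2*k+1-(j:ℕ) + (j:ℕ) = 2*k+1 := by omega
            rw [this]
        · rw [if_neg hjm, if_neg]
          · decide
          · rw [dvd_char k _ hk (by rw [hσv]; omega)]
            rw [hσv, hvval]
            have : (j:ℕ) ≠ (m:ℕ) := fun h => hjm (Fin.ext h)
            omega
  have : C.det * A.det = 1 := by
    rw [← Matrix.det_mul, key, Matrix.det_one]
  exact IsUnit.of_mul_eq_one C.det (by rw [mul_comm]; exact this)

lemma parity (k : ℕ) (hk : 2 ≤ k) (t : ℕ → ℕ)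
    (h0 : t 0 = 0)
    (h1 : ∀ n, 1 ≤ n → n ≤ 2 * k - 1 → t n = 1)
    (hrec : ∀ n, 2 * k ≤ n → t n = ∑ i ∈ Finset.Icc 1 (2 * k), t (n - i)) :
    ∀ n, n ≤ 4*k-2 → ((t n : ZMod 2) = if (2*k+1) ∣ n then 0 else 1) := by
  intro n
  induction n using Nat.strong_induction_on with
  | _ n ih =>
    intro hn
    by_cases hsm : n < 2*k
    · rcases Nat.eq_zero_or_pos n with rfl | hpos
      · simp [h0]
      · rw [h1 n hpos (by omega)]
        rw [if_neg]
        · norm_num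
        · rw [dvd_char k n hk hn]; omega
    · push_neg at hsm
      rw [hrec n hsm]
      push_cast
      have step : ∀ i ∈ Finset.Icc 1 (2*k), ((t (n-i) : ZMod 2))
          = (if (2*k+1) ∣ (n-i) then (1:ZMod 2) else 0) + 1 := by
        intro i hi
        rw [Finset.mem_Icc] at hi
        rw [ih (n-i) (by omega) (by omega)]
        by_cases h : (2*k+1) ∣ (n-i) <;> simp [h] <;> decide
      rw [Finset.sum_congr rfl step, Finset.sum_add_distrib]
      have hcard : (∑ _i ∈ Finset.Icc 1 (2*k), (1:ZMod 2)) = 0 := by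
        rw [Finset.sum_const, Nat.card_Icc]
        simp only [nsmul_eq_mul, mul_one]
        have h2k : (2*k+1-1 : ℕ) = 2*k := by omega
        rw [h2k]
        have : ((2*k : ℕ) : ZMod 2) = 0 := by
          rw [ZMod.natCast_eq_zero_iff]
          exact Dvd.intro k rfl
        exact this
      rw [hcard, add_zero]
      rw [Finset.sum_boole]
      by_cases hdvd : (2*k+1) ∣ n
      · rw [if_pos hdvd]
        have hn' : n = 2*k+1 := by
          rw [dvd_char k n hk hn] at hdvd; omega
        have hfil : (Finset.Icc 1 (2*k)).filter (fun i => (2*k+1) ∣ (n - i)) = ∅ := by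
          apply Finset.filter_false_of_mem
          intro x hx
          rw [Finset.mem_Icc] at hx
          rw [dvd_char k _ hk (by omega)]
          omega
        rw [hfil]
        simp
      · rw [if_neg hdvd]
        have hne1 : n ≠ 2*k+1 := fun h => hdvd (h ▸ dvd_refl _)
        rcases eq_or_ne n (2*k) with rfl | hne
        · have hfil : (Finset.Icc 1 (2*k)).filter (fun i => (2*k+1) ∣ (2*k - i)) = {2*k} := by
            apply Finset.eq_singleton_iff_unique_mem.mpr
            constructor
            · rw [Finset.mem_filter, Finset.mem_Icc]
              refine ⟨⟨by omega, le_refl _⟩, ?_⟩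
              have : 2*k - 2*k = 0 := by omega
              rw [this]
              exact dvd_zero _
            · intro x hx
              rw [Finset.mem_filter, Finset.mem_Icc] at hx
              obtain ⟨⟨hx1, hx2⟩, hd⟩ := hx
              rw [dvd_char k _ hk (by omega)] at hd
              omega
          rw [hfil]
          simp
        · have hn2 : 2*k+2 ≤ n := by omega
          have hfil : (Finset.Icc 1 (2*k)).filter (fun i => (2*k+1) ∣ (n - i)) = {n - (2*k+1)} := by
            apply Finset.eq_singleton_iff_unique_mem.mpr
            constructor
            · rw [Finset.mem_filter, Finset.mem_Icc]
              refine ⟨⟨by omega, by omega⟩, ?_⟩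
              have : n - (n - (2*k+1)) = 2*k+1 := by omega
              rw [this]
            · intro x hx
              rw [Finset.mem_filter, Finset.mem_Icc] at hx
              obtain ⟨⟨hx1, hx2⟩, hd⟩ := hx
              rw [dvd_char k _ hk (by omega)] at hd
              omega
          rw [hfil]
          simp

lemma exists_coeffs (k : ℕ) (hk : 2 ≤ k) (t : ℕ → ℕ)
    (hrec : ∀ n, 2 * k ≤ n → t n = ∑ i ∈ Finset.Icc 1 (2 * k), t (n - i)) :
    ∀ w, ∃ c : Fin (2*k) → ℚ, ∀ m, (t (m+w) : ℚ) = ∑ j, c j * (t (m + (j:ℕ)) : ℚ) := by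
  intro w
  induction w using Nat.strong_induction_on with
  | _ w ih =>
    by_cases hw : w < 2*k
    · refine ⟨fun j => if (j:ℕ) = w then 1 else 0, fun m => ?_⟩
      have : ∀ j : Fin (2*k), ((j:ℕ) = w) = (j = (⟨w, hw⟩ : Fin (2*k))) := by
        intro j; simp [Fin.ext_iff]
      simp only [this]
      rw [Finset.sum_eq_single (⟨w, hw⟩ : Fin (2*k))]
      · simp
      · intro b _ hb; simp [hb]
      · simp
    · push_neg at hw
      have hc := fun (i : ℕ) (hi : i ∈ Finset.Icc 1 (2*k)) =>
        ih (w - i) (by simp at hi; omega)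
      refine ⟨fun j => ∑ i ∈ (Finset.Icc 1 (2*k)).attach, (hc i i.2).choose j, fun m => ?_⟩
      have h1 : t (m + w) = ∑ i ∈ Finset.Icc 1 (2*k), t (m + w - i) := hrec (m+w) (by omega)
      have h2 : (t (m+w) : ℚ) = ∑ i ∈ (Finset.Icc 1 (2*k)).attach, (t (m + (w - (i:ℕ))) : ℚ) := by
        rw [h1]
        push_cast
        rw [← Finset.sum_attach]
        apply Finset.sum_congr rfl
        intro i _
        have hib := Finset.mem_Icc.mp i.2
        have h4 : m + w - (i:ℕ) = m + (w - (i:ℕ)) := by omega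
        rw [h4]
      rw [h2]
      have h3 : ∀ i ∈ (Finset.Icc 1 (2*k)).attach,
          (t (m + (w - (i:ℕ))) : ℚ) = ∑ j, (hc i i.2).choose j * (t (m + (j:ℕ)) : ℚ) :=
        fun i _ => (hc i i.2).choose_spec m
      rw [Finset.sum_congr rfl h3, Finset.sum_comm]
      apply Finset.sum_congr rfl
      intro j _
      rw [Finset.sum_mul]

theorem twoknacci_reduction_formula (k : ℕ) (hk : 2 ≤ k) (t : ℕ → ℕ)
    (h0 : t 0 = 0)
    (h1 : ∀ n, 1 ≤ n → n ≤ 2 * k - 1 → t n = 1)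
    (hrec : ∀ n, 2 * k ≤ n → t n = ∑ i ∈ Finset.Icc 1 (2 * k), t (n - i))
    (B0 : Matrix (Fin (2 * k)) (Fin (2 * k)) ℚ)
    (hB0 : ∀ i j, B0 i j = t ((i : ℕ) + (j : ℕ)))
    (T : ℕ → Fin (2 * k) → ℚ)
    (hT : ∀ n i, T n i = t (n + (i : ℕ))) :
    ∀ n w : ℕ, 1 ≤ n → 1 ≤ w →
      (t (n + w) : ℚ) = dotProduct (T n) (B0⁻¹.mulVec (T w)) := by
  intro n w _ _
  set N : Matrix (Fin (2*k)) (Fin (2*k)) ℤ := Matrix.of (fun i j => (t ((i:ℕ)+(j:ℕ)) : ℤ)) with hN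
  have hB0N : B0 = N.map (Int.castRingHom ℚ) := by
    ext i j
    simp [hB0, Matrix.map_apply, hN]
  have hdetB0 : B0.det = ((N.det : ℤ) : ℚ) := by
    rw [hB0N, ← RingHom.mapMatrix_apply, ← RingHom.map_det]
    rfl
  have hAdef : ∀ i j : Fin (2*k), (N.map (Int.castRingHom (ZMod 2))) i j
      = if (2*k+1) ∣ ((i:ℕ)+(j:ℕ)) then 0 else 1 := by
    intro i j
    have hi := i.isLt
    have hj := j.isLt
    rw [← parity k hk t h0 h1 hrec ((i:ℕ)+(j:ℕ)) (by omega)]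
    simp [hN, Matrix.map_apply]
  have hU : IsUnit (Int.castRingHom (ZMod 2) N.det) := by
    rw [RingHom.map_det]
    exact isUnit_detA k hk _ hAdef
  have hNdet : N.det ≠ 0 := by
    intro h
    rw [h] at hU
    simp at hU
  have hdet_ne : B0.det ≠ 0 := by
    rw [hdetB0]
    exact_mod_cast hNdet
  have hinv : B0⁻¹ * B0 = 1 := Matrix.nonsing_inv_mul B0 (isUnit_iff_ne_zero.mpr hdet_ne)
  obtain ⟨c, hcs⟩ := exists_coeffs k hk t hrec w
  have hTw : T w = B0.mulVec c := by
    funext i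
    rw [hT]
    have : w + (i:ℕ) = (i:ℕ) + w := add_comm _ _
    rw [this, hcs (i:ℕ)]
    rw [Matrix.mulVec, dotProduct]
    apply Finset.sum_congr rfl
    intro j _
    rw [hB0, mul_comm]
  have hc : B0⁻¹.mulVec (T w) = c := by
    rw [hTw, Matrix.mulVec_mulVec, hinv, Matrix.one_mulVec]
  rw [hc, dotProduct, hcs n]
  apply Finset.sum_congr rfl
  intro j _
  rw [hT, mul_comm]
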